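/- arXiv:2002.02443 — 2 statements merged into one kernel-verified Lean document; each statement's English description precedes it below -/
import Mathlib

section
/- Let 𝒜 ∈ ℝ^{N×N}, ℬ ∈ ℝ^{N×m}, 𝒞 ∈ ℝ^{r×N}, Σ ∈ ℝ^{N×N} symmetric, and let I ⊆ (0,∞) be the open set of T > 0 for which 𝒜_T := 𝒜 − (1/(2T)) I_N is Hurwitz. For T ∈ I let P_T and Q_T be the unique solutions of 𝒜_T P_T + P_T 𝒜_Tᵀ + (1/T)Σ + ℬℬᵀ = 0 and 𝒜_Tᵀ Q_T + Q_T 𝒜_T + 𝒞ᵀ𝒞 = 0, and let Γ_T := Q_T P_T. Then the maps T ↦ P_T and T ↦ Q_T are differentiable on I, their derivatives ∂_T P_T and ∂_T Q_T are the unique solutions of 𝒜_T (∂_T P_T) + (∂_T P_T) 𝒜_Tᵀ + (1/T²)(P_T − Σ) = 0 and 𝒜_Tᵀ (∂_T Q_T) + (∂_T Q_T) 𝒜_T + (1/T²) Q_T = 0, and ∂_T Γ_T = (∂_T Q_T) P_T + Q_T (∂_T P_T). -/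
open Matrix

attribute [local instance] Matrix.linftyOpNormedRing Matrix.linftyOpNormedAlgebra

/-- A real square matrix is Hurwitz if all its (complex) eigenvalues have negative real part. -/
def IsHurwitz {N : ℕ} (A : Matrix (Fin N) (Fin N) ℝ) : Prop :=
  ∀ μ ∈ spectrum ℂ (A.map (Complex.ofReal : ℝ → ℂ)), μ.re < 0


open Polynomial Topology Filter


lemma eval_charpoly_eq_det {n : ℕ} (M : Matrix (Fin n) (Fin n) ℂ) (μ : ℂ) :
    M.charpoly.eval μ = (μ • (1 : Matrix (Fin n) (Fin n) ℂ) - M).det := by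
  rw [Matrix.charpoly, ← Polynomial.coe_evalRingHom, RingHom.map_det]
  congr 1
  ext i j
  by_cases h : i = j <;>
    simp [h, Matrix.charmatrix_apply, Matrix.one_apply, Matrix.smul_apply, Matrix.sub_apply]

lemma mem_spectrum_iff_root {n : ℕ} (M : Matrix (Fin n) (Fin n) ℂ) (μ : ℂ) :
    μ ∈ spectrum ℂ M ↔ M.charpoly.eval μ = 0 := by
  rw [spectrum.mem_iff, Algebra.algebraMap_eq_smul_one, eval_charpoly_eq_det,
    Matrix.isUnit_iff_isUnit_det, isUnit_iff_ne_zero, not_not]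

lemma spectrum_transpose {n : ℕ} (M : Matrix (Fin n) (Fin n) ℂ) :
    spectrum ℂ Mᵀ = spectrum ℂ M := by
  ext μ
  rw [mem_spectrum_iff_root, mem_spectrum_iff_root, eval_charpoly_eq_det, eval_charpoly_eq_det]
  have h : μ • (1 : Matrix (Fin n) (Fin n) ℂ) - Mᵀ = (μ • 1 - M)ᵀ := by
    rw [Matrix.transpose_sub, Matrix.transpose_smul, Matrix.transpose_one]
  rw [h, Matrix.det_transpose]

lemma isUnit_list_prod {M : Type*} [Monoid M] :
    ∀ l : List M, (∀ x ∈ l, IsUnit x) → IsUnit l.prod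
  | [], _ => by simp
  | (a :: l), h => by
    rw [List.prod_cons]
    exact (h a List.mem_cons_self).mul
      (isUnit_list_prod l fun x hx => h x (List.mem_cons_of_mem a hx))

lemma aeval_mul_comm {n : ℕ} {A B X : Matrix (Fin n) (Fin n) ℂ}
    (h : A * X = X * B) (p : ℂ[X]) : (aeval A p) * X = X * (aeval B p) := by
  induction p using Polynomial.induction_on' with
  | add p q hp hq => simp [map_add, add_mul, mul_add, hp, hq]
  | monomial k a =>
    have hpow : A ^ k * X = X * B ^ k := by
      induction k with
      | zero => simp
      | succ k ih => rw [pow_succ, pow_succ, mul_assoc, h, ← mul_assoc, ih, mul_assoc]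
    have hm : ∀ M : Matrix (Fin n) (Fin n) ℂ, aeval M (monomial k a) = a • M ^ k := by
      intro M
      simp [aeval_monomial, Algebra.algebraMap_eq_smul_one, smul_mul_assoc]
    rw [hm, hm, smul_mul_assoc, hpow, mul_smul_comm]

lemma sylvester_inj {n : ℕ} {A : Matrix (Fin n) (Fin n) ℂ}
    (hA : ∀ μ ∈ spectrum ℂ A, μ.re < 0) {X : Matrix (Fin n) (Fin n) ℂ}
    (hX : A * X + X * Aᵀ = 0) : X = 0 := by
  set B : Matrix (Fin n) (Fin n) ℂ := -Aᵀ with hB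
  have h : A * X = X * B := by
    rw [hB, mul_neg, ← sub_eq_zero, sub_neg_eq_add, hX]
  have key := aeval_mul_comm h A.charpoly
  rw [Matrix.aeval_self_charpoly, zero_mul] at key
  have hunit : IsUnit (aeval B A.charpoly) := by
    have hsplit := (IsAlgClosed.splits A.charpoly).eq_prod_roots_of_monic
      A.charpoly_monic
    have hsplit' : A.charpoly = (A.charpoly.roots.toList.map fun a => Polynomial.X - C a).prod := by
      conv_lhs => rw [hsplit, ← Multiset.coe_toList A.charpoly.roots]
      rw [Multiset.map_coe, Multiset.prod_coe]
    have heval : aeval B A.charpoly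
        = (A.charpoly.roots.toList.map fun μ => B - μ • 1).prod := by
      conv_lhs => rw [hsplit']
      rw [map_list_prod (aeval B : ℂ[X] →ₐ[ℂ] Matrix (Fin n) (Fin n) ℂ), List.map_map]
      refine congrArg List.prod (List.map_congr_left fun μ _ => ?_)
      simp [Algebra.algebraMap_eq_smul_one]
    rw [heval]
    refine isUnit_list_prod _ fun M hM => ?_
    rw [List.mem_map] at hM
    obtain ⟨μ, hμ, rfl⟩ := hM
    have hμs : μ ∈ spectrum ℂ A := by
      rw [mem_spectrum_iff_root]
      exact Polynomial.isRoot_of_mem_roots (Multiset.mem_toList.mp hμ)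
    have hre : μ.re < 0 := hA μ hμs
    rw [Matrix.isUnit_iff_isUnit_det, isUnit_iff_ne_zero]
    have hrw : B - μ • 1 = ((-μ) • 1 - A)ᵀ := by
      rw [hB, Matrix.transpose_sub, Matrix.transpose_smul, Matrix.transpose_one]
      simp only [neg_smul]
      abel
    rw [hrw, Matrix.det_transpose, ← eval_charpoly_eq_det]
    have hnr : A.charpoly.eval (-μ) ≠ 0 := by
      intro h0
      have hmem : (-μ) ∈ spectrum ℂ A := (mem_spectrum_iff_root A (-μ)).mpr h0
      have := hA _ hmem
      simp only [Complex.neg_re] at this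
      linarith
    exact hnr
  obtain ⟨u, hu⟩ := hunit
  have hXu : X * (u : Matrix (Fin n) (Fin n) ℂ) = 0 := by rw [hu]; exact key.symm
  calc X = X * ↑u * ↑u⁻¹ := by rw [mul_assoc, Units.mul_inv, mul_one]
  _ = 0 := by rw [hXu, zero_mul]

lemma lyap_inj {n : ℕ} {A : Matrix (Fin n) (Fin n) ℝ}
    (hA : ∀ μ ∈ spectrum ℂ (A.map (Complex.ofReal : ℝ → ℂ)), μ.re < 0)
    {X : Matrix (Fin n) (Fin n) ℝ} (hX : A * X + X * Aᵀ = 0) : X = 0 := by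
  have hinj : Function.Injective
      ((Complex.ofRealHom.mapMatrix : Matrix (Fin n) (Fin n) ℝ →+* Matrix (Fin n) (Fin n) ℂ)) :=
    fun M M' h => Matrix.map_injective Complex.ofReal_injective h
  apply hinj
  rw [map_zero]
  refine sylvester_inj hA ?_
  have := congrArg Complex.ofRealHom.mapMatrix hX
  rw [map_add, _root_.map_mul, _root_.map_mul, map_zero] at this
  have hT : Complex.ofRealHom.mapMatrix Aᵀ = (A.map (Complex.ofReal : ℝ → ℂ))ᵀ := by
    ext i j
    simp [RingHom.mapMatrix_apply]
  rw [hT] at this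
  exact this

open Metric in
lemma eventually_spectrum_subset {A : Type*} [NormedRing A] [NormedAlgebra ℂ A]
    [CompleteSpace A] (a : A) {U : Set ℂ} (hU : IsOpen U) (ha : spectrum ℂ a ⊆ U) :
    ∀ᶠ b in 𝓝 a, spectrum ℂ b ⊆ U := by
  set R : ℝ := (‖a‖ + 1) * ‖(1 : A)‖ with hR
  set K : Set ℂ := closedBall 0 R \ U with hK
  have hKc : IsCompact K := (isCompact_closedBall _ _).diff hU
  have h1 : ∀ᶠ b in 𝓝 a, ∀ z ∈ K, IsUnit (algebraMap ℂ A z - b) := by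
    apply hKc.eventually_forall_of_forall_eventually
    intro z hz
    have hz' : IsUnit (algebraMap ℂ A z - a) := by
      have hns : z ∉ spectrum ℂ a := fun h => hz.2 (ha h)
      rw [spectrum.mem_iff, not_not] at hns
      exact hns
    have hcont : Continuous (fun p : A × ℂ => algebraMap ℂ A p.2 - p.1) :=
      ((continuous_algebraMap ℂ A).comp continuous_snd).sub continuous_fst
    exact (Units.isOpen.preimage hcont).mem_nhds hz'
  have h2 : ∀ᶠ b in 𝓝 a, ‖b‖ ≤ ‖a‖ + 1 := by
    have : Metric.closedBall a 1 ∈ 𝓝 a := Metric.closedBall_mem_nhds a one_pos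
    filter_upwards [this] with b hb
    have : ‖b - a‖ ≤ 1 := by rwa [Metric.mem_closedBall, dist_eq_norm] at hb
    calc ‖b‖ = ‖a + (b - a)‖ := by rw [add_sub_cancel]
    _ ≤ ‖a‖ + ‖b - a‖ := norm_add_le _ _
    _ ≤ ‖a‖ + 1 := by linarith
  filter_upwards [h1, h2] with b hb1 hb2
  intro z hzb
  by_contra hzU
  have hzball : z ∈ closedBall (0 : ℂ) R := by
    have := spectrum.norm_le_norm_mul_of_mem hzb
    rw [mem_closedBall, dist_zero_right, hR]
    calc ‖z‖ ≤ ‖b‖ * ‖(1 : A)‖ := this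
    _ ≤ (‖a‖ + 1) * ‖(1 : A)‖ := by
        exact mul_le_mul_of_nonneg_right hb2 (norm_nonneg _)
  have hzK : z ∈ K := ⟨hzball, hzU⟩
  exact (spectrum.mem_iff.mp hzb) (hb1 z hzK)

lemma map_sub_smul_one {N : ℕ} (𝒜 : Matrix (Fin N) (Fin N) ℝ) (c : ℝ) :
    (𝒜 - c • 1).map (Complex.ofReal : ℝ → ℂ)
      = 𝒜.map (Complex.ofReal : ℝ → ℂ) - ((c : ℂ)) • 1 := by
  ext i j
  by_cases h : i = j <;>
    simp [h, Matrix.sub_apply, Matrix.smul_apply, Matrix.one_apply, Matrix.map_apply]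

lemma isOpen_hurwitz_param {N : ℕ} (𝒜 : Matrix (Fin N) (Fin N) ℝ) :
    IsOpen {T : ℝ | 0 < T ∧ IsHurwitz (𝒜 - (1 / (2 * T)) • 1)} := by
  rw [isOpen_iff_mem_nhds]
  rintro T ⟨hT0, hH⟩
  have hU : IsOpen {z : ℂ | z.re < 0} := isOpen_lt Complex.continuous_re continuous_const
  set φ : ℝ → Matrix (Fin N) (Fin N) ℂ :=
    fun t => 𝒜.map (Complex.ofReal : ℝ → ℂ) - (((1 / (2 * t) : ℝ) : ℂ)) • 1 with hφ
  have hcA : ContinuousAt φ T := by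
    apply ContinuousAt.sub continuousAt_const
    apply ContinuousAt.smul (f := fun t : ℝ => (((1 / (2 * t) : ℝ) : ℂ))) (g := fun _ => (1 : Matrix (Fin N) (Fin N) ℂ)) _ continuousAt_const
    exact Complex.continuous_ofReal.continuousAt.comp
      ((continuousAt_const.div (continuousAt_const.mul continuousAt_id)
        (by simp [hT0.ne'] : (2 : ℝ) * T ≠ 0)))
  have hsub : spectrum ℂ (φ T) ⊆ {z : ℂ | z.re < 0} := by
    intro μ hμ
    have := hH μ
    rw [map_sub_smul_one] at this
    exact this hμ
  have hev1 : ∀ᶠ t in 𝓝 T, spectrum ℂ (φ t) ⊆ {z : ℂ | z.re < 0} :=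
    hcA.tendsto.eventually (eventually_spectrum_subset (φ T) hU hsub)
  filter_upwards [hev1, Ioi_mem_nhds hT0] with t ht1 ht2
  refine ⟨ht2, fun μ hμ => ?_⟩
  rw [map_sub_smul_one] at hμ
  exact ht1 hμ

/-- The product topology on real square matrices, stated so that it unfolds reducibly. -/
noncomputable abbrev matPiTopology {N : ℕ} : TopologicalSpace (Matrix (Fin N) (Fin N) ℝ) :=
  (NormedRing.toSeminormedRing :
    SeminormedRing (Matrix (Fin N) (Fin N) ℝ)).toPseudoMetricSpace.toUniformSpace.toTopologicalSpace

/-- The additive group of real square matrices underlying the operator norm. -/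
noncomputable abbrev matNormAddCommGroup {N : ℕ} : AddCommGroup (Matrix (Fin N) (Fin N) ℝ) :=
  NormedAddCommGroup.toAddCommGroup

/-- The real module of square matrices underlying the operator norm. -/
noncomputable abbrev matNormModule {N : ℕ} : Module ℝ (Matrix (Fin N) (Fin N) ℝ) :=
  NormedSpace.toModule

section
attribute [local instance] matPiTopology matNormAddCommGroup matNormModule

lemma ale_machine {N : ℕ} (ML MR : Matrix (Fin N) (Fin N) ℝ)
    (I : Set ℝ) (hIopen : IsOpen I) (T : ℝ) (hT : T ∈ I)
    (hinj : ∀ t ∈ I, ∀ X : Matrix (Fin N) (Fin N) ℝ,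
      ML * X + X * MR - (1/t) • X = 0 → X = 0)
    (c : ℝ → Matrix (Fin N) (Fin N) ℝ) (c' : Matrix (Fin N) (Fin N) ℝ)
    (hc : HasDerivAt c c' T) (hT0 : T ≠ 0)
    (P : ℝ → Matrix (Fin N) (Fin N) ℝ)
    (hP : ∀ t ∈ I, ML * P t + P t * MR - (1/t) • P t + c t = 0) :
    ∃ DP, HasDerivAt P DP T ∧
      ML * DP + DP * MR - (1/T) • DP + ((1/T^2) • P T + c') = 0 ∧
      ∀ X, ML * X + X * MR - (1/T) • X + ((1/T^2) • P T + c') = 0 → X = DP := by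
  classical
  let C : Matrix (Fin N) (Fin N) ℝ →L[ℝ] Matrix (Fin N) (Fin N) ℝ :=
    (LinearMap.mulLeft ℝ ML + LinearMap.mulRight ℝ MR).toContinuousLinearMap
  let L : ℝ → (Matrix (Fin N) (Fin N) ℝ →L[ℝ] Matrix (Fin N) (Fin N) ℝ) :=
    fun t => C - (1/t) • 1
  have hLapp : ∀ (t : ℝ) (X : Matrix (Fin N) (Fin N) ℝ),
      L t X = ML * X + X * MR - (1/t) • X := by
    intro t X
    simp [L, C, ContinuousLinearMap.sub_apply, ContinuousLinearMap.smul_apply,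
      ContinuousLinearMap.one_apply, LinearMap.mulLeft_apply, LinearMap.mulRight_apply]
  have hLinj : ∀ t ∈ I, Function.Injective (L t) := by
    intro t ht X Y h
    have h0 : L t (X - Y) = 0 := by rw [map_sub, h, sub_self]
    rw [hLapp] at h0
    exact sub_eq_zero.mp (hinj t ht (X - Y) h0)
  have hUnit : ∀ t ∈ I, IsUnit (L t) := by
    intro t ht
    have hinj' := hLinj t ht
    have hsurj : Function.Surjective
        ((L t) : Matrix (Fin N) (Fin N) ℝ →ₗ[ℝ] Matrix (Fin N) (Fin N) ℝ) :=
      LinearMap.injective_iff_surjective.mp hinj'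
    let e := LinearEquiv.ofBijective
      ((L t) : Matrix (Fin N) (Fin N) ℝ →ₗ[ℝ] Matrix (Fin N) (Fin N) ℝ) ⟨hinj', hsurj⟩
    let e' := e.toContinuousLinearEquiv
    refine ⟨⟨L t, (e'.symm : Matrix (Fin N) (Fin N) ℝ →L[ℝ] Matrix (Fin N) (Fin N) ℝ),
      ?_, ?_⟩, rfl⟩
    · refine ContinuousLinearMap.ext fun x => ?_
      show L t (e'.symm x) = x
      exact e'.apply_symm_apply x
    · refine ContinuousLinearMap.ext fun x => ?_
      show e'.symm (L t x) = x
      exact e'.symm_apply_apply x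
  have hImem : I ∈ 𝓝 T := hIopen.mem_nhds hT
  have hLd : HasDerivAt L ((1/T^2) • (1 : Matrix (Fin N) (Fin N) ℝ →L[ℝ] Matrix (Fin N) (Fin N) ℝ)) T := by
    have h1 : HasDerivAt (fun t : ℝ => 1/t) (-(1/T^2)) T := by
      simpa [one_div] using hasDerivAt_inv hT0
    have h2 := (h1.smul_const
      (1 : Matrix (Fin N) (Fin N) ℝ →L[ℝ] Matrix (Fin N) (Fin N) ℝ)).const_sub C
    rw [neg_smul, neg_neg] at h2
    exact h2
  have hLdiff : DifferentiableAt ℝ L T := hLd.differentiableAt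
  have hinvd := DifferentiableAt.inverse (𝕜 := ℝ)
    (R := Matrix (Fin N) (Fin N) ℝ →L[ℝ] Matrix (Fin N) (Fin N) ℝ) hLdiff (hUnit T hT)
  have hcPd : HasDerivAt (fun t : ℝ => -(c t)) (-c') T := hc.neg
  have hfP := (hinvd.hasDerivAt).clm_apply hcPd
  obtain ⟨DP, hfP⟩ : ∃ D, HasDerivAt _ D T := ⟨_, hfP⟩
  have hP' : HasDerivAt P DP T := by
    refine hfP.congr_of_eventuallyEq ?_
    filter_upwards [hImem] with t ht
    have hu := hUnit t ht
    have heq : L t (P t) = -(c t) := by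
      rw [hLapp, eq_neg_iff_add_eq_zero]
      exact hP t ht
    rw [← heq, ← ContinuousLinearMap.mul_apply, Ring.inverse_mul_cancel _ hu,
      ContinuousLinearMap.one_apply]
  -- differentiate the identity L t (P t) + c t = 0
  have hg : HasDerivAt (fun t => L t (P t) + c t)
      (((1/T^2) • (1 : Matrix (Fin N) (Fin N) ℝ →L[ℝ] Matrix (Fin N) (Fin N) ℝ)) (P T)
        + L T DP + c') T :=
    (hLd.clm_apply hP').add hc
  have hg0 : HasDerivAt (fun _ : ℝ => (0 : Matrix (Fin N) (Fin N) ℝ))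
      (((1/T^2) • (1 : Matrix (Fin N) (Fin N) ℝ →L[ℝ] Matrix (Fin N) (Fin N) ℝ)) (P T)
        + L T DP + c') T := by
    refine hg.congr_of_eventuallyEq ?_
    filter_upwards [hImem] with t ht
    rw [hLapp]
    exact (hP t ht).symm
  have hD0 : ((1/T^2) • (1 : Matrix (Fin N) (Fin N) ℝ →L[ℝ] Matrix (Fin N) (Fin N) ℝ)) (P T)
      + L T DP + c' = 0 :=
    (hasDerivAt_const T (0 : Matrix (Fin N) (Fin N) ℝ)).unique hg0 ▸ rfl
  rw [ContinuousLinearMap.smul_apply, ContinuousLinearMap.one_apply, hLapp] at hD0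
  have hALE : ML * DP + DP * MR - (1/T) • DP + ((1/T^2) • P T + c') = 0 := by
    rw [← hD0]; module
  refine ⟨DP, hP', hALE, fun X hX => ?_⟩
  have hLL : L T X = L T DP := by
    rw [hLapp, hLapp]
    have h1 : ML * X + X * MR - (1/T) • X = -((1/T^2) • P T + c') := by
      rw [eq_neg_iff_add_eq_zero]; exact hX
    have h2 : ML * DP + DP * MR - (1/T) • DP = -((1/T^2) • P T + c') := by
      rw [eq_neg_iff_add_eq_zero]; exact hALE
    rw [h1, h2]
  exact hLinj T hT hLL

end

/-- **Differentiability of the discounted Gramians in the effective time horizon.**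
On the set `I` of `T > 0` for which `𝒜_T = 𝒜 − (1/(2T))I` is Hurwitz, the solutions `P_T`,
`Q_T` of the ALEs `𝒜_T P_T + P_T 𝒜_Tᵀ + (1/T)Σ + ℬℬᵀ = 0`,
`𝒜_Tᵀ Q_T + Q_T 𝒜_T + 𝒞ᵀ𝒞 = 0` are differentiable in `T`; their derivatives are the unique
solutions of `𝒜_T(∂_T P_T) + (∂_T P_T)𝒜_Tᵀ + (1/T²)(P_T − Σ) = 0` and
`𝒜_Tᵀ(∂_T Q_T) + (∂_T Q_T)𝒜_T + (1/T²)Q_T = 0`, and the Hankelian `Γ_T = Q_T P_T` satisfies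
`∂_T Γ_T = (∂_T Q_T)P_T + Q_T(∂_T P_T)`. -/
theorem discounted_gramians_derivative_in_horizon
    {N m r : ℕ} (𝒜 : Matrix (Fin N) (Fin N) ℝ) (ℬ : Matrix (Fin N) (Fin m) ℝ)
    (𝒞 : Matrix (Fin r) (Fin N) ℝ)
    (Sgm : Matrix (Fin N) (Fin N) ℝ) (hSgm : Sgmᵀ = Sgm)
    (I : Set ℝ)
    (hI : I = {T : ℝ | 0 < T ∧ IsHurwitz (𝒜 - (1 / (2 * T)) • 1)})
    (P Q : ℝ → Matrix (Fin N) (Fin N) ℝ)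
    (hP : ∀ T ∈ I, (𝒜 - (1 / (2 * T)) • 1) * P T + P T * (𝒜 - (1 / (2 * T)) • 1)ᵀ +
        (1 / T) • Sgm + ℬ * ℬᵀ = 0)
    (hQ : ∀ T ∈ I, (𝒜 - (1 / (2 * T)) • 1)ᵀ * Q T + Q T * (𝒜 - (1 / (2 * T)) • 1) +
        𝒞ᵀ * 𝒞 = 0)
    (Γ : ℝ → Matrix (Fin N) (Fin N) ℝ) (hΓ : ∀ T : ℝ, Γ T = Q T * P T) :
    ∀ T ∈ I, ∃ DP DQ : Matrix (Fin N) (Fin N) ℝ,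
      HasDerivAt P DP T ∧ HasDerivAt Q DQ T ∧
      (𝒜 - (1 / (2 * T)) • 1) * DP + DP * (𝒜 - (1 / (2 * T)) • 1)ᵀ +
        (1 / T ^ 2) • (P T - Sgm) = 0 ∧
      (∀ X : Matrix (Fin N) (Fin N) ℝ,
        (𝒜 - (1 / (2 * T)) • 1) * X + X * (𝒜 - (1 / (2 * T)) • 1)ᵀ +
          (1 / T ^ 2) • (P T - Sgm) = 0 → X = DP) ∧
      (𝒜 - (1 / (2 * T)) • 1)ᵀ * DQ + DQ * (𝒜 - (1 / (2 * T)) • 1) +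
        (1 / T ^ 2) • Q T = 0 ∧
      (∀ X : Matrix (Fin N) (Fin N) ℝ,
        (𝒜 - (1 / (2 * T)) • 1)ᵀ * X + X * (𝒜 - (1 / (2 * T)) • 1) +
          (1 / T ^ 2) • Q T = 0 → X = DQ) ∧
      HasDerivAt Γ (DQ * P T + Q T * DP) T := by
  intro T hT
  have hT' := hT
  rw [hI] at hT'
  obtain ⟨hT0, hTH⟩ := hT'
  have hT0' : T ≠ 0 := ne_of_gt hT0
  have hIopen : IsOpen I := by rw [hI]; exact isOpen_hurwitz_param 𝒜
  have hinjP : ∀ t ∈ I, ∀ X : Matrix (Fin N) (Fin N) ℝ,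
      𝒜 * X + X * 𝒜ᵀ - (1/t) • X = 0 → X = 0 := by
    intro t ht X hX
    rw [hI] at ht
    obtain ⟨ht0, htH⟩ := ht
    refine lyap_inj (A := 𝒜 - (1/(2*t)) • 1) htH ?_
    have e : (𝒜 - (1/(2*t)) • 1) * X + X * (𝒜 - (1/(2*t)) • 1)ᵀ
        = 𝒜 * X + X * 𝒜ᵀ - (1/t) • X := by
      rw [Matrix.transpose_sub, Matrix.transpose_smul, Matrix.transpose_one,
        Matrix.sub_mul, Matrix.mul_sub, Matrix.smul_mul, Matrix.mul_smul,
        Matrix.one_mul, Matrix.mul_one]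
      module
    rw [e]; exact hX
  have hinjQ : ∀ t ∈ I, ∀ X : Matrix (Fin N) (Fin N) ℝ,
      𝒜ᵀ * X + X * 𝒜 - (1/t) • X = 0 → X = 0 := by
    intro t ht X hX
    rw [hI] at ht
    obtain ⟨ht0, htH⟩ := ht
    have hsp : ∀ μ ∈ spectrum ℂ
        (((𝒜 - (1/(2*t)) • 1)ᵀ).map (Complex.ofReal : ℝ → ℂ)), μ.re < 0 := by
      intro μ hμ
      apply htH
      rwa [Matrix.transpose_map, spectrum_transpose] at hμ
    refine lyap_inj (A := (𝒜 - (1/(2*t)) • 1)ᵀ) hsp ?_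
    have e : (𝒜 - (1/(2*t)) • 1)ᵀ * X + X * ((𝒜 - (1/(2*t)) • 1)ᵀ)ᵀ
        = 𝒜ᵀ * X + X * 𝒜 - (1/t) • X := by
      rw [Matrix.transpose_transpose, Matrix.transpose_sub, Matrix.transpose_smul,
        Matrix.transpose_one, Matrix.sub_mul, Matrix.mul_sub, Matrix.smul_mul,
        Matrix.mul_smul, Matrix.one_mul, Matrix.mul_one]
      module
    rw [e]; exact hX
  have hcP : HasDerivAt (fun t : ℝ => (1/t) • Sgm + ℬ * ℬᵀ) ((-(1/T^2)) • Sgm) T := by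
    have h1 : HasDerivAt (fun t : ℝ => 1/t) (-(1/T^2)) T := by
      simpa [one_div] using hasDerivAt_inv hT0'
    exact (h1.smul_const Sgm).add_const (ℬ * ℬᵀ)
  have hPale : ∀ t ∈ I, 𝒜 * P t + P t * 𝒜ᵀ - (1/t) • P t + ((1/t) • Sgm + ℬ * ℬᵀ) = 0 := by
    intro t ht
    have h := hP t ht
    have e : 𝒜 * P t + P t * 𝒜ᵀ - (1/t) • P t + ((1/t) • Sgm + ℬ * ℬᵀ)
        = (𝒜 - (1 / (2 * t)) • 1) * P t + P t * (𝒜 - (1 / (2 * t)) • 1)ᵀ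
          + (1 / t) • Sgm + ℬ * ℬᵀ := by
      rw [Matrix.transpose_sub, Matrix.transpose_smul, Matrix.transpose_one,
        Matrix.sub_mul, Matrix.mul_sub, Matrix.smul_mul, Matrix.mul_smul,
        Matrix.one_mul, Matrix.mul_one]
      module
    rw [e]; exact h
  have hQale : ∀ t ∈ I, 𝒜ᵀ * Q t + Q t * 𝒜 - (1/t) • Q t + 𝒞ᵀ * 𝒞 = 0 := by
    intro t ht
    have h := hQ t ht
    have e : 𝒜ᵀ * Q t + Q t * 𝒜 - (1/t) • Q t + 𝒞ᵀ * 𝒞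
        = (𝒜 - (1 / (2 * t)) • 1)ᵀ * Q t + Q t * (𝒜 - (1 / (2 * t)) • 1)
          + 𝒞ᵀ * 𝒞 := by
      rw [Matrix.transpose_sub, Matrix.transpose_smul, Matrix.transpose_one,
        Matrix.sub_mul, Matrix.mul_sub, Matrix.smul_mul, Matrix.mul_smul,
        Matrix.one_mul, Matrix.mul_one]
      module
    rw [e]; exact h
  obtain ⟨DP, hDP, hPeq, hPuniq⟩ :=
    ale_machine 𝒜 𝒜ᵀ I hIopen T hT hinjP _ _ hcP hT0' P hPale
  obtain ⟨DQ, hDQ, hQeq, hQuniq⟩ :=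
    ale_machine 𝒜ᵀ 𝒜 I hIopen T hT hinjQ _ 0 (hasDerivAt_const T (𝒞ᵀ * 𝒞)) hT0' Q hQale
  have heqP : ∀ X : Matrix (Fin N) (Fin N) ℝ,
      (𝒜 - (1 / (2 * T)) • 1) * X + X * (𝒜 - (1 / (2 * T)) • 1)ᵀ + (1 / T ^ 2) • (P T - Sgm)
      = 𝒜 * X + X * 𝒜ᵀ - (1/T) • X + ((1/T^2) • P T + (-(1/T^2)) • Sgm) := by
    intro X
    rw [Matrix.transpose_sub, Matrix.transpose_smul, Matrix.transpose_one,
      Matrix.sub_mul, Matrix.mul_sub, Matrix.smul_mul, Matrix.mul_smul,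
      Matrix.one_mul, Matrix.mul_one, smul_sub]
    module
  have heqQ : ∀ X : Matrix (Fin N) (Fin N) ℝ,
      (𝒜 - (1 / (2 * T)) • 1)ᵀ * X + X * (𝒜 - (1 / (2 * T)) • 1) + (1 / T ^ 2) • Q T
      = 𝒜ᵀ * X + X * 𝒜 - (1/T) • X + ((1/T^2) • Q T + 0) := by
    intro X
    rw [Matrix.transpose_sub, Matrix.transpose_smul, Matrix.transpose_one,
      Matrix.sub_mul, Matrix.mul_sub, Matrix.smul_mul, Matrix.mul_smul,
      Matrix.one_mul, Matrix.mul_one]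
    module
  refine ⟨DP, DQ, hDP, hDQ, ?_, ?_, ?_, ?_, ?_⟩
  · rw [heqP DP]; exact hPeq
  · intro X hX
    apply hPuniq
    rw [← heqP X]; exact hX
  · rw [heqQ DQ]; exact hQeq
  · intro X hX
    apply hQuniq
    rw [← heqQ X]; exact hX
  · have hmul := hDQ.mul hDP
    have hfun : Γ = fun t => Q t * P t := funext hΓ
    rw [hfun]
    exact hmul
end

section
/- Let 𝒜 ∈ ℝ^{N×N}, ℬ ∈ ℝ^{N×m}, 𝒞 ∈ ℝ^{r×N}, and Σ ∈ ℝ^{N×N} symmetric. For all sufficiently small T > 0 the matrix 𝒜_T := 𝒜 − (1/(2T)) I_N is Hurwitz; let P_T and Q_T be the unique solutions of 𝒜_T P_T + P_T 𝒜_Tᵀ + (1/T)Σ + ℬℬᵀ = 0 and 𝒜_Tᵀ Q_T + Q_T 𝒜_T + 𝒞ᵀ𝒞 = 0, and Γ_T := Q_T P_T. Then, as T → 0+: P_T = Σ + T(𝒜Σ + Σ𝒜ᵀ + ℬℬᵀ) + O(T²), Q_T = T 𝒞ᵀ𝒞 + T²(𝒜ᵀ𝒞ᵀ𝒞 + 𝒞ᵀ𝒞𝒜)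 + O(T³), and Γ_T = T 𝒞ᵀ𝒞Σ + T²(𝒞ᵀ𝒞(2𝒜Σ + Σ𝒜ᵀ + ℬℬᵀ) + 𝒜ᵀ𝒞ᵀ𝒞Σ) + O(T³). -/
open Matrix Asymptotics Filter
open scoped Topology

attribute [local instance] Matrix.linftyOpNormedRing Matrix.linftyOpNormedAlgebra

lemma gsh_map_sub_smul_one {N : ℕ} (𝒜 : Matrix (Fin N) (Fin N) ℝ) (c : ℝ) :
    (𝒜 - c • 1).map (Complex.ofReal : ℝ → ℂ)
      = 𝒜.map (Complex.ofReal : ℝ → ℂ) - algebraMap ℂ _ (c : ℂ) := by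
  ext i j
  by_cases hij : i = j <;>
    simp [Matrix.map_apply, Matrix.one_apply, Matrix.algebraMap_matrix_apply, hij]

lemma gsh_hurwitz_small {N : ℕ} (𝒜 : Matrix (Fin N) (Fin N) ℝ) :
    ∀ᶠ T in 𝓝[>] (0 : ℝ), IsHurwitz (𝒜 - (1 / (2 * T)) • 1) := by
  set M := 𝒜.map (Complex.ofReal : ℝ → ℂ) with hM
  set K := ‖M‖ with hK
  have hK0 : 0 ≤ K := norm_nonneg _
  have hε : (0 : ℝ) < 1 / (2 * K + 2) := by positivity
  filter_upwards [Ioo_mem_nhdsGT_of_mem (Set.mem_Ico.mpr ⟨le_refl 0, hε⟩)] with T hT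
  obtain ⟨hT0, hTε⟩ := hT
  intro μ hμ
  rcases Nat.eq_zero_or_pos N with hN | hN
  · subst hN
    exfalso
    rw [spectrum.mem_iff] at hμ
    exact hμ (isUnit_of_subsingleton _)
  · haveI : Nonempty (Fin N) := ⟨⟨0, hN⟩⟩
    set c : ℝ := 1 / (2 * T) with hc
    rw [gsh_map_sub_smul_one, ← spectrum.sub_singleton_eq] at hμ
    rw [Set.mem_sub] at hμ
    obtain ⟨ν, hν, y, hy, hνy⟩ := hμ
    rw [Set.mem_singleton_iff] at hy
    subst hy
    have hre : ν.re ≤ K := le_trans (Complex.re_le_norm ν)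
      (by exact spectrum.norm_le_norm_of_mem hν)
    have hcK : K < c := by
      have h1 : T * (2 * K + 2) < 1 := by
        rw [← lt_div_iff₀ (by linarith)]; exact hTε
      rw [hc, lt_div_iff₀ (by linarith)]
      nlinarith
    have : μ.re = ν.re - c := by rw [← hνy]; simp
    rw [this]; linarith

lemma gsh_aux_eq {N : ℕ} (A X S C : Matrix (Fin N) (Fin N) ℝ) (T : ℝ) (hT : T ≠ 0)
    (h : (A - (1 / (2 * T)) • 1) * X + X * (A - (1 / (2 * T)) • 1)ᵀ + (1 / T) • S + C = 0) :
    X = S + T • (A * X + X * Aᵀ + C) := by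
  have key : S + T • (A * X + X * Aᵀ + C) - X =
      T • ((A - (1 / (2 * T)) • 1) * X + X * (A - (1 / (2 * T)) • 1)ᵀ + (1 / T) • S + C) := by
    rw [transpose_sub, transpose_smul, transpose_one, sub_mul, mul_sub,
      Matrix.smul_mul, Matrix.mul_smul, one_mul, mul_one]
    match_scalars <;> field_simp <;> ring
  rw [h, smul_zero, sub_eq_zero] at key
  exact key.symm

lemma gsh_nAB {N : ℕ} (A B X : Matrix (Fin N) (Fin N) ℝ) :
    ‖A * X + X * B‖ ≤ (‖A‖ + ‖B‖) * ‖X‖ := by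
  calc ‖A * X + X * B‖ ≤ ‖A * X‖ + ‖X * B‖ := norm_add_le _ _
    _ ≤ ‖A‖ * ‖X‖ + ‖X‖ * ‖B‖ := add_le_add (norm_mul_le _ _) (norm_mul_le _ _)
    _ = (‖A‖ + ‖B‖) * ‖X‖ := by ring

lemma gsh_residG {N : ℕ} (Y X Cc M Sg S : Matrix (Fin N) (Fin N) ℝ) (T : ℝ) :
    Y * X - T • (Cc * Sg) - (T ^ 2) • (Cc * S + M * Sg) =
      T • (Cc * (X - Sg - T • S)) + (Y - T • Cc - (T ^ 2) • M) * Sg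
        + (Y - T • Cc) * (X - Sg) := by
  simp only [mul_sub, sub_mul, Matrix.mul_smul, Matrix.smul_mul, smul_sub, smul_add, smul_smul]
  module

lemma gsh_main_bounds {N : ℕ} (A X Y Sg BB Cc : Matrix (Fin N) (Fin N) ℝ) (T a b s cc : ℝ)
    (hT0 : 0 < T)
    (ha : ‖A‖ + ‖Aᵀ‖ ≤ a) (hb : ‖BB‖ ≤ b) (hs : ‖Sg‖ ≤ s) (hcc : ‖Cc‖ ≤ cc)
    (hTa : T * a ≤ 1 / 2) (hT1 : T ≤ 1)
    (hXe : X = Sg + T • (A * X + X * Aᵀ + BB))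
    (hYe : Y = T • (Aᵀ * Y + Y * A + Cc)) :
    ‖X - Sg - T • (A * Sg + Sg * Aᵀ + BB)‖ ≤ (a * (2 * a * (s + b) + b)) * T ^ 2 ∧
    ‖Y - T • Cc - (T ^ 2) • (Aᵀ * Cc + Cc * A)‖ ≤ (2 * a ^ 2 * cc) * T ^ 3 ∧
    ‖Y * X - T • (Cc * Sg) - (T ^ 2) • (Cc * (A * Sg + Sg * Aᵀ + BB) + (Aᵀ * Cc + Cc * A) * Sg)‖
      ≤ (cc * (a * (2 * a * (s + b) + b)) + (2 * a ^ 2 * cc) * s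
          + (2 * a * cc) * (2 * a * (s + b) + b)) * T ^ 3 := by
  have ha0 : 0 ≤ a := le_trans (by positivity) ha
  have hb0 : 0 ≤ b := le_trans (norm_nonneg _) hb
  have hs0 : 0 ≤ s := le_trans (norm_nonneg _) hs
  have hcc0 : 0 ≤ cc := le_trans (norm_nonneg _) hcc
  -- generic bound on A*Z + Z*Aᵀ and Aᵀ*Z + Z*A
  have hcomb : ∀ Z : Matrix (Fin N) (Fin N) ℝ, ‖A * Z + Z * Aᵀ‖ ≤ a * ‖Z‖ := fun Z =>
    le_trans (gsh_nAB A Aᵀ Z) (mul_le_mul_of_nonneg_right ha (norm_nonneg Z))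
  have hcomb' : ∀ Z : Matrix (Fin N) (Fin N) ℝ, ‖Aᵀ * Z + Z * A‖ ≤ a * ‖Z‖ := fun Z =>
    le_trans (gsh_nAB Aᵀ A Z) (by
      rw [show ‖Aᵀ‖ + ‖A‖ = ‖A‖ + ‖Aᵀ‖ from add_comm _ _]
      exact mul_le_mul_of_nonneg_right ha (norm_nonneg Z))
  have hTnorm : ∀ Z : Matrix (Fin N) (Fin N) ℝ, ‖T • Z‖ = T * ‖Z‖ := fun Z => by
    rw [norm_smul, Real.norm_eq_abs, abs_of_pos hT0]
  -- bound on ‖X‖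
  have hnX : ‖X‖ ≤ 2 * (s + b) := by
    have h3 : ‖X‖ ≤ s + T * (a * ‖X‖ + b) := by
      calc ‖X‖ = ‖Sg + T • (A * X + X * Aᵀ + BB)‖ := by rw [← hXe]
        _ ≤ ‖Sg‖ + ‖T • (A * X + X * Aᵀ + BB)‖ := norm_add_le _ _
        _ = ‖Sg‖ + T * ‖A * X + X * Aᵀ + BB‖ := by rw [hTnorm]
        _ ≤ s + T * (a * ‖X‖ + b) := by
            have h4 : ‖A * X + X * Aᵀ + BB‖ ≤ a * ‖X‖ + b :=
              le_trans (norm_add_le _ _) (add_le_add (hcomb X) hb)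
            exact add_le_add hs (mul_le_mul_of_nonneg_left h4 hT0.le)
    nlinarith [norm_nonneg X, mul_le_mul_of_nonneg_right hTa (norm_nonneg X),
      mul_le_mul_of_nonneg_right hT1 hb0, mul_nonneg hT0.le hb0]
  -- first-order residual of X
  have hDX : ‖X - Sg‖ ≤ T * (2 * a * (s + b) + b) := by
    have hid : X - Sg = T • (A * X + X * Aᵀ + BB) := by
      conv_lhs => rw [hXe]
      rw [add_sub_cancel_left]
    rw [hid, hTnorm]
    have h4 : ‖A * X + X * Aᵀ + BB‖ ≤ 2 * a * (s + b) + b := by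
      have := le_trans (norm_add_le (A * X + X * Aᵀ) BB) (add_le_add (hcomb X) hb)
      nlinarith [mul_le_mul_of_nonneg_left hnX ha0]
    exact mul_le_mul_of_nonneg_left h4 hT0.le
  -- second-order residual of X
  have hEX : ‖X - Sg - T • (A * Sg + Sg * Aᵀ + BB)‖ ≤ (a * (2 * a * (s + b) + b)) * T ^ 2 := by
    have hid : X - Sg - T • (A * Sg + Sg * Aᵀ + BB)
        = T • (A * (X - Sg) + (X - Sg) * Aᵀ) := by
      have hDXe : X - Sg = T • (A * X + X * Aᵀ + BB) := by
        conv_lhs => rw [hXe]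
        rw [add_sub_cancel_left]
      conv_lhs => rw [hDXe]
      simp only [mul_sub, sub_mul]
      module
    rw [hid, hTnorm]
    calc T * ‖A * (X - Sg) + (X - Sg) * Aᵀ‖ ≤ T * (a * ‖X - Sg‖) :=
          mul_le_mul_of_nonneg_left (hcomb _) hT0.le
      _ ≤ T * (a * (T * (2 * a * (s + b) + b))) := by
          exact mul_le_mul_of_nonneg_left
            (mul_le_mul_of_nonneg_left hDX ha0) hT0.le
      _ = (a * (2 * a * (s + b) + b)) * T ^ 2 := by ring
  -- bound on ‖Y‖
  have hnY : ‖Y‖ ≤ 2 * T * cc := by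
    have h3 : ‖Y‖ ≤ T * (a * ‖Y‖ + cc) := by
      calc ‖Y‖ = ‖T • (Aᵀ * Y + Y * A + Cc)‖ := by rw [← hYe]
        _ = T * ‖Aᵀ * Y + Y * A + Cc‖ := hTnorm _
        _ ≤ T * (a * ‖Y‖ + cc) := mul_le_mul_of_nonneg_left
            (le_trans (norm_add_le _ _) (add_le_add (hcomb' Y) hcc)) hT0.le
    nlinarith [norm_nonneg Y, mul_le_mul_of_nonneg_right hTa (norm_nonneg Y)]
  -- first-order residual of Y
  have hDYe : Y - T • Cc = T • (Aᵀ * Y + Y * A) := by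
    conv_lhs => rw [hYe]
    module
  have hDY : ‖Y - T • Cc‖ ≤ (2 * a * cc) * T ^ 2 := by
    rw [hDYe, hTnorm]
    calc T * ‖Aᵀ * Y + Y * A‖ ≤ T * (a * ‖Y‖) :=
          mul_le_mul_of_nonneg_left (hcomb' Y) hT0.le
      _ ≤ T * (a * (2 * T * cc)) :=
          mul_le_mul_of_nonneg_left (mul_le_mul_of_nonneg_left hnY ha0) hT0.le
      _ = (2 * a * cc) * T ^ 2 := by ring
  -- second-order residual of Y
  have hEY : ‖Y - T • Cc - (T ^ 2) • (Aᵀ * Cc + Cc * A)‖ ≤ (2 * a ^ 2 * cc) * T ^ 3 := by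
    have hid : Y - T • Cc - (T ^ 2) • (Aᵀ * Cc + Cc * A)
        = T • (Aᵀ * (Y - T • Cc) + (Y - T • Cc) * A) := by
      conv_lhs => rw [hDYe]
      simp only [mul_sub, sub_mul, Matrix.mul_smul, Matrix.smul_mul]
      module
    rw [hid, hTnorm]
    calc T * ‖Aᵀ * (Y - T • Cc) + (Y - T • Cc) * A‖ ≤ T * (a * ‖Y - T • Cc‖) :=
          mul_le_mul_of_nonneg_left (hcomb' _) hT0.le
      _ ≤ T * (a * ((2 * a * cc) * T ^ 2)) :=
          mul_le_mul_of_nonneg_left (mul_le_mul_of_nonneg_left hDY ha0) hT0.le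
      _ = (2 * a ^ 2 * cc) * T ^ 3 := by ring
  refine ⟨hEX, hEY, ?_⟩
  -- Hankelian residual
  rw [gsh_residG]
  have t1 : ‖T • (Cc * (X - Sg - T • (A * Sg + Sg * Aᵀ + BB)))‖
      ≤ cc * (a * (2 * a * (s + b) + b)) * T ^ 3 := by
    rw [hTnorm]
    calc T * ‖Cc * (X - Sg - T • (A * Sg + Sg * Aᵀ + BB))‖
        ≤ T * (cc * ((a * (2 * a * (s + b) + b)) * T ^ 2)) := by
          refine mul_le_mul_of_nonneg_left ?_ hT0.le
          exact le_trans (norm_mul_le _ _) (mul_le_mul hcc hEX (norm_nonneg _) hcc0)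
      _ = cc * (a * (2 * a * (s + b) + b)) * T ^ 3 := by ring
  have t2 : ‖(Y - T • Cc - (T ^ 2) • (Aᵀ * Cc + Cc * A)) * Sg‖
      ≤ (2 * a ^ 2 * cc) * s * T ^ 3 := by
    calc ‖(Y - T • Cc - (T ^ 2) • (Aᵀ * Cc + Cc * A)) * Sg‖
        ≤ ‖Y - T • Cc - (T ^ 2) • (Aᵀ * Cc + Cc * A)‖ * ‖Sg‖ := norm_mul_le _ _
      _ ≤ ((2 * a ^ 2 * cc) * T ^ 3) * s :=
          mul_le_mul hEY hs (norm_nonneg _) (by positivity)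
      _ = (2 * a ^ 2 * cc) * s * T ^ 3 := by ring
  have t3 : ‖(Y - T • Cc) * (X - Sg)‖
      ≤ (2 * a * cc) * (2 * a * (s + b) + b) * T ^ 3 := by
    calc ‖(Y - T • Cc) * (X - Sg)‖ ≤ ‖Y - T • Cc‖ * ‖X - Sg‖ := norm_mul_le _ _
      _ ≤ ((2 * a * cc) * T ^ 2) * (T * (2 * a * (s + b) + b)) :=
          mul_le_mul hDY hDX (norm_nonneg _) (by positivity)
      _ = (2 * a * cc) * (2 * a * (s + b) + b) * T ^ 3 := by ring
  calc ‖T • (Cc * (X - Sg - T • (A * Sg + Sg * Aᵀ + BB)))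
        + (Y - T • Cc - (T ^ 2) • (Aᵀ * Cc + Cc * A)) * Sg
        + (Y - T • Cc) * (X - Sg)‖
      ≤ ‖T • (Cc * (X - Sg - T • (A * Sg + Sg * Aᵀ + BB)))
        + (Y - T • Cc - (T ^ 2) • (Aᵀ * Cc + Cc * A)) * Sg‖
        + ‖(Y - T • Cc) * (X - Sg)‖ := norm_add_le _ _
    _ ≤ (‖T • (Cc * (X - Sg - T • (A * Sg + Sg * Aᵀ + BB)))‖
        + ‖(Y - T • Cc - (T ^ 2) • (Aᵀ * Cc + Cc * A)) * Sg‖)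
        + ‖(Y - T • Cc) * (X - Sg)‖ := by
          exact add_le_add (norm_add_le _ _) le_rfl
    _ ≤ (cc * (a * (2 * a * (s + b) + b)) + (2 * a ^ 2 * cc) * s
          + (2 * a * cc) * (2 * a * (s + b) + b)) * T ^ 3 := by
        nlinarith [t1, t2, t3]

lemma gsh_Wid {N : ℕ} (A Sg BB Cc : Matrix (Fin N) (Fin N) ℝ) :
    Cc * ((2 : ℝ) • (A * Sg) + Sg * Aᵀ + BB) + Aᵀ * Cc * Sg =
      Cc * (A * Sg + Sg * Aᵀ + BB) + (Aᵀ * Cc + Cc * A) * Sg := by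
  simp only [two_smul, mul_add, add_mul, Matrix.mul_smul, ← mul_assoc]
  noncomm_ring

/-- **Small-horizon expansions of the discounted Gramians and Hankelian.**
For all sufficiently small `T > 0` the matrix `𝒜_T = 𝒜 − (1/(2T))I` is Hurwitz, and the
solutions of the ALEs `𝒜_T P_T + P_T 𝒜_Tᵀ + (1/T)Σ + ℬℬᵀ = 0` and
`𝒜_Tᵀ Q_T + Q_T 𝒜_T + 𝒞ᵀ𝒞 = 0` satisfy, as `T → 0+`,
`P_T = Σ + T(𝒜Σ + Σ𝒜ᵀ + ℬℬᵀ) + O(T²)`, `Q_T = T𝒞ᵀ𝒞 + T²(𝒜ᵀ𝒞ᵀ𝒞 + 𝒞ᵀ𝒞𝒜) + O(T³)` and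
`Γ_T = Q_T P_T = T𝒞ᵀ𝒞Σ + T²(𝒞ᵀ𝒞(2𝒜Σ + Σ𝒜ᵀ + ℬℬᵀ) + 𝒜ᵀ𝒞ᵀ𝒞Σ) + O(T³)`. -/
theorem discounted_gramians_small_horizon_expansion
    {N m r : ℕ} (𝒜 : Matrix (Fin N) (Fin N) ℝ) (ℬ : Matrix (Fin N) (Fin m) ℝ)
    (𝒞 : Matrix (Fin r) (Fin N) ℝ)
    (Sgm : Matrix (Fin N) (Fin N) ℝ) (hSgm : Sgmᵀ = Sgm)
    (P Q : ℝ → Matrix (Fin N) (Fin N) ℝ)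
    (hP : ∀ T : ℝ, 0 < T → IsHurwitz (𝒜 - (1 / (2 * T)) • 1) →
      (𝒜 - (1 / (2 * T)) • 1) * P T + P T * (𝒜 - (1 / (2 * T)) • 1)ᵀ +
        (1 / T) • Sgm + ℬ * ℬᵀ = 0)
    (hQ : ∀ T : ℝ, 0 < T → IsHurwitz (𝒜 - (1 / (2 * T)) • 1) →
      (𝒜 - (1 / (2 * T)) • 1)ᵀ * Q T + Q T * (𝒜 - (1 / (2 * T)) • 1) + 𝒞ᵀ * 𝒞 = 0) :
    (∀ᶠ T in 𝓝[>] (0 : ℝ), IsHurwitz (𝒜 - (1 / (2 * T)) • 1)) ∧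
    (fun T : ℝ => P T - Sgm - T • (𝒜 * Sgm + Sgm * 𝒜ᵀ + ℬ * ℬᵀ))
      =O[𝓝[>] (0 : ℝ)] (fun T : ℝ => T ^ 2) ∧
    (fun T : ℝ => Q T - T • (𝒞ᵀ * 𝒞) - (T ^ 2) • (𝒜ᵀ * (𝒞ᵀ * 𝒞) + 𝒞ᵀ * 𝒞 * 𝒜))
      =O[𝓝[>] (0 : ℝ)] (fun T : ℝ => T ^ 3) ∧
    (fun T : ℝ => Q T * P T - T • (𝒞ᵀ * 𝒞 * Sgm) -
        (T ^ 2) • (𝒞ᵀ * 𝒞 * ((2 : ℝ) • (𝒜 * Sgm) + Sgm * 𝒜ᵀ + ℬ * ℬᵀ) +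
          𝒜ᵀ * (𝒞ᵀ * 𝒞) * Sgm))
      =O[𝓝[>] (0 : ℝ)] (fun T : ℝ => T ^ 3) := by
  have hHur := gsh_hurwitz_small 𝒜
  set aa : ℝ := ‖𝒜‖ + ‖𝒜ᵀ‖ with hadef
  set b : ℝ := ‖ℬ * ℬᵀ‖ with hbdef
  set s : ℝ := ‖Sgm‖ with hsdef
  set cc : ℝ := ‖𝒞ᵀ * 𝒞‖ with hccdef
  have main : ∀ᶠ T in 𝓝[>] (0 : ℝ), 0 < T ∧
      ‖P T - Sgm - T • (𝒜 * Sgm + Sgm * 𝒜ᵀ + ℬ * ℬᵀ)‖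
        ≤ (aa * (2 * aa * (s + b) + b)) * T ^ 2 ∧
      ‖Q T - T • (𝒞ᵀ * 𝒞) - (T ^ 2) • (𝒜ᵀ * (𝒞ᵀ * 𝒞) + 𝒞ᵀ * 𝒞 * 𝒜)‖
        ≤ (2 * aa ^ 2 * cc) * T ^ 3 ∧
      ‖Q T * P T - T • (𝒞ᵀ * 𝒞 * Sgm) - (T ^ 2) • (𝒞ᵀ * 𝒞 * (𝒜 * Sgm + Sgm * 𝒜ᵀ + ℬ * ℬᵀ)
          + (𝒜ᵀ * (𝒞ᵀ * 𝒞) + 𝒞ᵀ * 𝒞 * 𝒜) * Sgm)‖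
        ≤ (cc * (aa * (2 * aa * (s + b) + b)) + (2 * aa ^ 2 * cc) * s
            + (2 * aa * cc) * (2 * aa * (s + b) + b)) * T ^ 3 := by
    have haa0' : (0:ℝ) ≤ aa := by rw [hadef]; positivity
    have hε : (0 : ℝ) < min 1 (1 / (2 * aa + 2)) :=
      lt_min one_pos (by apply div_pos one_pos; linarith)
    filter_upwards [hHur, Ioo_mem_nhdsGT_of_mem (Set.mem_Ico.mpr ⟨le_refl 0, hε⟩)]
      with T hHurT hT
    obtain ⟨hT0, hTε⟩ := hT
    have hT1 : T ≤ 1 := (lt_min_iff.mp hTε).1.le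
    have hTa : T * aa ≤ 1 / 2 := by
      have h2 := (lt_min_iff.mp hTε).2
      rw [lt_div_iff₀ (by linarith)] at h2
      nlinarith
    have hXe := gsh_aux_eq 𝒜 (P T) Sgm (ℬ * ℬᵀ) T hT0.ne' (hP T hT0 hHurT)
    have hq := hQ T hT0 hHurT
    rw [transpose_sub, transpose_smul, transpose_one] at hq
    have hYe : Q T = T • (𝒜ᵀ * Q T + Q T * 𝒜 + 𝒞ᵀ * 𝒞) := by
      have h2 := gsh_aux_eq 𝒜ᵀ (Q T) 0 (𝒞ᵀ * 𝒞) T hT0.ne' (by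
        rw [transpose_sub, transpose_smul, transpose_one, transpose_transpose,
          smul_zero, add_zero]
        exact hq)
      rwa [zero_add, transpose_transpose] at h2
    obtain ⟨e1, e2, e3⟩ := gsh_main_bounds 𝒜 (P T) (Q T) Sgm (ℬ * ℬᵀ) (𝒞ᵀ * 𝒞)
      T aa b s cc hT0 hadef.ge hbdef.ge hsdef.ge hccdef.ge hTa hT1 hXe hYe
    exact ⟨hT0, e1, e2, e3⟩
  refine ⟨hHur, ?_, ?_, ?_⟩
  · rw [Asymptotics.isBigO_iff]
    refine ⟨aa * (2 * aa * (s + b) + b), ?_⟩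
    filter_upwards [main] with T h
    rw [Real.norm_eq_abs, abs_of_nonneg (sq_nonneg T)]
    exact h.2.1
  · rw [Asymptotics.isBigO_iff]
    refine ⟨2 * aa ^ 2 * cc, ?_⟩
    filter_upwards [main] with T h
    obtain ⟨hT0, -, h2, -⟩ := h
    rw [Real.norm_eq_abs, abs_of_pos (pow_pos hT0 3)]
    exact h2
  · rw [Asymptotics.isBigO_iff]
    refine ⟨cc * (aa * (2 * aa * (s + b) + b)) + (2 * aa ^ 2 * cc) * s
      + (2 * aa * cc) * (2 * aa * (s + b) + b), ?_⟩
    simp only [gsh_Wid]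
    filter_upwards [main] with T h
    obtain ⟨hT0, -, -, h3⟩ := h
    rw [Real.norm_eq_abs, abs_of_pos (pow_pos hT0 3)]
    exact h3
end
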